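/- If λ(γ,β) < α < γ < β < κ, then tr(α,β) = tr(γ,β) ⌢ tr(α,γ), i.e., the walk from β to α passes through γ and decomposes as the concatenation of the walk from β to γ with the walk from γ to α. -/

import Mathlib

open Cardinal Set

/-- The walk `Tr(α,β) : ω → κ` along the `C`-sequence `C`:
`Tr(α,β)(0) = β`; `Tr(α,β)(n+1) = min(C_{Tr(α,β)(n)} \ α)` as long as the previous
step is above `α`, and `α` from then on. -/
noncomputable def TrW (C : Ordinal → Set Ordinal) (α β : Ordinal) : ℕ → Ordinal
  | 0 => β
  | n + 1 => if α < TrW C α β n then sInf (C (TrW C α β n) ∩ Set.Ici α) else α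

/-- `ρ₂(α,β)`: the length of the walk from `β` down to `α`. -/
noncomputable def rho2 (C : Ordinal → Set Ordinal) (α β : Ordinal) : ℕ :=
  sInf {n : ℕ | TrW C α β n = α}

/-- The image of `tr(α,β) = Tr(α,β) ↾ ρ₂(α,β)`. -/
noncomputable def trIm (C : Ordinal → Set Ordinal) (α β : Ordinal) : Set Ordinal :=
  (fun n => TrW C α β n) '' {n : ℕ | n < rho2 C α β}

/-- `λ(α,β) := max{sup(C_{Tr(α,β)(i)} ∩ α) : i < ρ₂(α,β)}`. -/
noncomputable def lamW (C : Ordinal → Set Ordinal) (α β : Ordinal) : Ordinal :=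
  sSup {x | ∃ n < rho2 C α β, x = sSup (C (TrW C α β n) ∩ Set.Iio α)}

/-- `λ₂(α,β) := sup(α ∩ {sup(C_δ ∩ α) : δ ∈ im(tr(α,β))})`. -/
noncomputable def lam2 (C : Ordinal → Set Ordinal) (α β : Ordinal) : Ordinal :=
  sSup (Set.Iio α ∩ {x | ∃ δ ∈ trIm C α β, x = sSup (C δ ∩ Set.Iio α)})

/-- `acc(s) := {δ ∈ s : sup(s ∩ δ) = δ > 0}`. -/
def accSet (s : Set Ordinal) : Set Ordinal := {δ ∈ s | 0 < δ ∧ sSup (s ∩ Set.Iio δ) = δ}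

/-- `C` is a `C`-sequence over `κ`: each `C α` is a closed subset of `α`
with `sup (C α) = sup α`. -/
def IsCSeq (κo : Ordinal) (C : Ordinal → Set Ordinal) : Prop :=
  ∀ α < κo, (∀ x ∈ C α, x < α) ∧ sSup (C α) = sSup (Set.Iio α) ∧
    ∀ δ < α, 0 < δ → sSup (C α ∩ Set.Iio δ) = δ → δ ∈ C α

lemma trw_succ (C : Ordinal → Set Ordinal) (α β : Ordinal) (n : ℕ) :
    TrW C α β (n+1) = if α < TrW C α β n then sInf (C (TrW C α β n) ∩ Set.Ici α) else α := rfl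

lemma trw_add (C : Ordinal → Set Ordinal) (α β β' : Ordinal) (m : ℕ)
    (h : TrW C α β m = β') : ∀ n, TrW C α β (m + n) = TrW C α β' n := by
  intro n
  induction n with
  | zero => exact h
  | succ n ih => rw [← Nat.add_assoc, trw_succ, ih]; rfl

lemma trw_terminates (κo : Ordinal) (C : Ordinal → Set Ordinal) (hC : IsCSeq κo C)
    (α : Ordinal) : ∀ β, β < κo → α ≤ β → ∃ n, TrW C α β n = α := by
  intro β
  induction β using Ordinal.induction with
  | h β ih =>
    intro hβ hαβ
    rcases eq_or_lt_of_le hαβ with heq | hlt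
    · exact ⟨0, heq.symm⟩
    have h1 : TrW C α β 1 = sInf (C β ∩ Set.Ici α) := by
      rw [trw_succ]; simp [TrW, hlt]
    by_cases hne : (C β ∩ Set.Ici α).Nonempty
    · have hmem := csInf_mem hne
      rw [← h1] at hmem
      have hδβ : TrW C α β 1 < β := (hC β hβ).1 _ hmem.1
      obtain ⟨n, hn⟩ := ih _ hδβ (hδβ.trans hβ) hmem.2
      exact ⟨1 + n, by rwa [trw_add C α β _ 1 rfl]⟩
    · rw [Set.not_nonempty_iff_eq_empty] at hne
      rw [hne] at h1
      simp only [show sInf (∅ : Set Ordinal) = 0 by simp] at h1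
      rcases eq_or_lt_of_le (show (0:Ordinal) ≤ α from zero_le) with h0 | h0
      · exact ⟨1, by rw [h1, ← h0]⟩
      · refine ⟨2, ?_⟩
        rw [trw_succ, h1]
        simp [not_lt_zero']

/-- If `γ < δ < κo` and `0 < γ`, then `C δ` has an element `≥ γ`. -/
lemma cseq_above (κo : Ordinal) (C : Ordinal → Set Ordinal) (hC : IsCSeq κo C)
    (γ δ : Ordinal) (h0 : 0 < γ) (hγδ : γ < δ) (hδ : δ < κo) :
    (C δ ∩ Set.Ici γ).Nonempty := by
  by_contra hne
  rw [Set.not_nonempty_iff_eq_empty] at hne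
  have hsub : C δ ⊆ Set.Iio γ := by
    intro x hx
    by_contra hxg
    exact absurd (Set.eq_empty_iff_forall_notMem.1 hne x ⟨hx, show γ ≤ x from not_lt.1 hxg⟩) (fun h => h)
  have hge : γ ≤ sSup (C δ) := by
    rw [(hC δ hδ).2.1]
    exact le_csSup bddAbove_Iio hγδ
  rcases Set.eq_empty_or_nonempty (C δ) with he | hne'
  · rw [he] at hge; simp at hge; exact absurd hge (by simp [h0.ne'])
  · have hle : sSup (C δ) ≤ γ := csSup_le hne' (fun x hx => (hsub hx).le)
    have hcap : C δ ∩ Set.Iio γ = C δ := Set.inter_eq_left.2 hsub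
    have hmem : γ ∈ C δ := (hC δ hδ).2.2 γ hγδ h0 (by rw [hcap]; exact le_antisymm hle hge)
    exact absurd (hsub hmem) (lt_irrefl γ)


/-- Fact 2: if `λ(γ,β) < α < γ < β < κ` then `tr(α,β) = tr(γ,β) ⌢ tr(α,γ)`. -/
theorem fact2 (κ : Cardinal) (hreg : κ.IsRegular) (huncb : Cardinal.aleph 0 < κ)
    (C : Ordinal → Set Ordinal) (hC : IsCSeq κ.ord C) (α β γ : Ordinal)
    (h1 : lamW C γ β < α) (h2 : α < γ) (h3 : γ < β) (h4 : β < κ.ord) :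
    rho2 C α β = rho2 C γ β + rho2 C α γ ∧
      (∀ n < rho2 C γ β, TrW C α β n = TrW C γ β n) ∧
      (∀ n < rho2 C α γ, TrW C α β (rho2 C γ β + n) = TrW C α γ n) := by
  have hγ0 : 0 < γ := lt_of_le_of_lt (show (0:Ordinal) ≤ α from zero_le) h2
  have hαγ : α < γ := h2
  set m := rho2 C γ β with hm
  set k := rho2 C α γ with hk
  -- termination facts
  have hSγβ : {n : ℕ | TrW C γ β n = γ}.Nonempty :=
    trw_terminates κ.ord C hC γ β h4 h3.le
  have hmmem : TrW C γ β m = γ := Nat.sInf_mem hSγβ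
  have hmne : ∀ n < m, TrW C γ β n ≠ γ := fun n hn => Nat.notMem_of_lt_sInf hn
  have hSαγ : {n : ℕ | TrW C α γ n = α}.Nonempty :=
    trw_terminates κ.ord C hC α γ (h3.trans h4) h2.le
  have hkmem : TrW C α γ k = α := Nat.sInf_mem hSαγ
  have hkne : ∀ n < k, TrW C α γ n ≠ α := fun n hn => Nat.notMem_of_lt_sInf hn
  -- lamW bound
  have hlamT : BddAbove {x | ∃ n < m, x = sSup (C (TrW C γ β n) ∩ Set.Iio γ)} := by
    apply Set.Finite.bddAbove
    apply Set.Finite.subset (Set.Finite.image (fun n => sSup (C (TrW C γ β n) ∩ Set.Iio γ))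
      (Set.finite_Iio m))
    rintro x ⟨n, hn, rfl⟩
    exact ⟨n, hn, rfl⟩
  have hlam : ∀ n < m, sSup (C (TrW C γ β n) ∩ Set.Iio γ) < α :=
    fun n hn => lt_of_le_of_lt (le_csSup hlamT ⟨n, hn, rfl⟩) h1
  -- the main claim by induction
  have claim : ∀ n ≤ m, TrW C α β n = TrW C γ β n ∧ γ ≤ TrW C γ β n ∧ TrW C γ β n ≤ β := by
    intro n
    induction n with
    | zero => exact fun _ => ⟨rfl, h3.le, le_refl β⟩
    | succ n ih =>
      intro hn1
      obtain ⟨heq, hge, hle⟩ := ih (Nat.le_of_succ_le hn1)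
      have hnm : n < m := hn1
      set δ := TrW C γ β n with hδ
      have hγδ : γ < δ := lt_of_le_of_ne hge (fun h => hmne n hnm h.symm)
      have hδκ : δ < κ.ord := lt_of_le_of_lt hle h4
      have hne := cseq_above κ.ord C hC γ δ hγ0 hγδ hδκ
      have hsets : C δ ∩ Set.Ici α = C δ ∩ Set.Ici γ := by
        apply Set.Subset.antisymm
        · rintro x ⟨hx1, hx2⟩
          refine ⟨hx1, ?_⟩
          by_contra hxg
          have hxlt : x < γ := not_le.1 hxg
          have : x ≤ sSup (C δ ∩ Set.Iio γ) :=
            le_csSup (BddAbove.mono Set.inter_subset_right bddAbove_Iio) ⟨hx1, hxlt⟩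
          exact absurd (lt_of_le_of_lt this (hlam n hnm)) (not_lt.2 hx2)
        · exact fun x hx => ⟨hx.1, le_trans h2.le hx.2⟩
      have hstepγ : TrW C γ β (n+1) = sInf (C δ ∩ Set.Ici γ) := by
        rw [trw_succ, if_pos hγδ]
      have hstepα : TrW C α β (n+1) = sInf (C δ ∩ Set.Ici γ) := by
        rw [trw_succ, heq, if_pos (h2.trans hγδ), hsets]
      have hmem2 := csInf_mem hne
      refine ⟨by rw [hstepα, hstepγ], ?_, ?_⟩
      · rw [hstepγ]; exact hmem2.2
      · rw [hstepγ]; exact le_trans ((hC δ hδκ).1 _ hmem2.1).le hle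
  have hmγ : TrW C α β m = γ := by rw [(claim m (le_refl m)).1, hmmem]
  have hshift : ∀ n, TrW C α β (m + n) = TrW C α γ n := trw_add C α β γ m hmγ
  -- rho2 computation
  have hmemS : TrW C α β (m + k) = α := by rw [hshift, hkmem]
  have hlow : ∀ n < m + k, TrW C α β n ≠ α := by
    intro n hn
    rcases le_or_gt n m with hnm | hnm
    · rw [(claim n hnm).1]
      exact fun h => absurd (h ▸ (claim n hnm).2.1) (not_le.2 h2)
    · obtain ⟨j, rfl⟩ := Nat.exists_eq_add_of_lt hnm
      rw [show m + j + 1 = m + (j + 1) by omega, hshift]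
      exact hkne (j+1) (by omega)
  have hrho : rho2 C α β = m + k := by
    have h₁ : rho2 C α β ≤ m + k := Nat.sInf_le hmemS
    rcases lt_or_eq_of_le h₁ with hlt | heq
    · exact absurd (Nat.sInf_mem (⟨m + k, hmemS⟩ : {n : ℕ | TrW C α β n = α}.Nonempty))
        (hlow _ hlt)
    · exact heq
  exact ⟨hrho, fun n hn => (claim n hn.le).1, fun n hn => hshift n⟩
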